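/- Let n = pq for distinct odd primes p and q with n not dividing 2^l + 1 for any l ≥ 1. If q does not divide 2^l + 1 for any l ≥ 1 and p divides 2^m + 1 for some m ≥ 1, then the 2-cyclotomic coset C_q modulo n is closed under negation, while the coset C_p is not closed under negation. -/
import Mathlib


/-- The 2-cyclotomic coset modulo `n` containing `i`. -/
def cyclotomicCoset (n : ℕ) (i : ZMod n) : Set (ZMod n) :=
  {x | ∃ j : ℕ, x = i * 2 ^ j}

theorem cyclotomicCoset_q_neg_closed_p_not (p q : ℕ) (hp : p.Prime) (hq : q.Prime)
    (hpo : Odd p) (hqo : Odd q) (hpq : p ≠ q)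
    (hn : ∀ l : ℕ, 1 ≤ l → ¬ (p * q ∣ 2 ^ l + 1))
    (hqd : ∀ l : ℕ, 1 ≤ l → ¬ (q ∣ 2 ^ l + 1))
    (hpd : ∃ m : ℕ, 1 ≤ m ∧ p ∣ 2 ^ m + 1) :
    (∀ x ∈ cyclotomicCoset (p * q) (q : ZMod (p * q)),
        -x ∈ cyclotomicCoset (p * q) (q : ZMod (p * q))) ∧
    ¬ (∀ x ∈ cyclotomicCoset (p * q) (p : ZMod (p * q)),
        -x ∈ cyclotomicCoset (p * q) (p : ZMod (p * q))) := by
  obtain ⟨m, hm1, c, hc⟩ := hpd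
  constructor
  · rintro x ⟨j, rfl⟩
    refine ⟨j + m, ?_⟩
    have key : ((q : ZMod (p * q)) * 2 ^ (j + m) + q * 2 ^ j) = 0 := by
      have h1 : ((q : ZMod (p * q)) * 2 ^ (j + m) + q * 2 ^ j)
          = (q : ZMod (p * q)) * 2 ^ j * ((2 ^ m + 1 : ℕ) : ZMod (p * q)) := by
        push_cast; ring
      rw [h1, hc]
      push_cast
      have : ((p : ZMod (p * q)) * q) = 0 := by
        rw [← Nat.cast_mul, ZMod.natCast_self]
      linear_combination (2:ZMod (p*q)) ^ j * (c : ZMod (p*q)) * this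
    linear_combination -key
  · intro h
    obtain ⟨j, hj⟩ := h (p : ZMod (p * q)) ⟨0, by simp⟩
    have hdvd : (p * q : ℕ) ∣ p * (2 ^ j + 1) := by
      have : ((p * (2 ^ j + 1) : ℕ) : ZMod (p * q)) = 0 := by
        push_cast
        linear_combination -hj
      exact (ZMod.natCast_eq_zero_iff _ _).mp this
    have hq2 : q ∣ 2 ^ j + 1 :=
      (Nat.mul_dvd_mul_iff_left hp.pos).mp (by rwa [mul_comm p q] at hdvd ⊢)
    rcases Nat.eq_zero_or_pos j with rfl | hj1
    · obtain rfl := (Nat.prime_dvd_prime_iff_eq hq Nat.prime_two).mp (by simpa using hq2)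
      simp [Nat.odd_iff] at hqo
    · exact hqd j hj1 hq2
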